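/- There exist a matrix A ∈ GL(n+1, ℂ) and formal power series g_0, g_1, …, g_{n−2} ∈ ℂ[[z]] such that for each i (0 ≤ i ≤ n−2) the order of g_i is exactly i+1 and the coefficient of z^{i+1} in g_i equals 1, and such that A·v = (1, z, g_0(z^k), g_1(z^k), …, g_{n−2}(z^k)) as a vector of formal power series, where g_i(z^k) denotes the substitution of z^k into g_i. (Equivalently, the ramification indices of the associated curves of the standard embedding at a fixed point p of the generalized Fermat group are b_1(p) = k−2 and b_l(p) = k−1 for 2 ≤ l ≤ n−1.) -/

import Mathlib

noncomputable def genBinom (x : ℂ) (i : ℕ) : ℂ :=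
  (∏ m ∈ Finset.range i, (x - (m : ℂ))) / (Nat.factorial i : ℂ)

lemma genBinom_zero (x : ℂ) : genBinom x 0 = 1 := by
  simp [genBinom]

lemma genBinom_ne_zero {k : ℕ} (hk : 2 ≤ k) (i : ℕ) : genBinom ((k:ℂ))⁻¹ i ≠ 0 := by
  have hk0 : (k:ℂ) ≠ 0 := by
    simp only [ne_eq, Nat.cast_eq_zero]; omega
  apply div_ne_zero
  · rw [Finset.prod_ne_zero_iff]
    intro m _
    rw [sub_ne_zero]
    intro h
    have h1 : (1:ℂ) = (m:ℂ) * (k:ℂ) := by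
      field_simp at h
      linear_combination h
    have h2 : (m * k : ℕ) = 1 := by exact_mod_cast h1.symm
    have := Nat.eq_one_of_mul_eq_one_left h2
    omega
  · exact Nat.cast_ne_zero.mpr (Nat.factorial_ne_zero i)

/-- sharp normal form of the standard embedding of a generalized Fermat curve
of type `(k,n)` at a fixed point of its generalized Fermat group: there are a matrix
`A ∈ GL(n+1, ℂ)` and power series `g₀, …, g_{n-2}` with `g i` of order exactly `i + 1` and
leading coefficient `1`, such that `A · v = (1, z, g₀(z^k), …, g_{n-2}(z^k))`.  Here `G i`
denotes the substitution of `z^k` into `g i`, characterized by its coefficients.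
(Equivalently, `b₁(p) = k - 2` and `b_l(p) = k - 1` for `2 ≤ l ≤ n - 1`.) -/
theorem stmt_1 (k n : ℕ) (hk : 2 ≤ k) (hn : 3 ≤ n)
    (lam : ℕ → ℂ) (hlam0 : lam 0 = 1)
    (hlam_ne0 : ∀ i, 1 ≤ i → i ≤ n - 2 → lam i ≠ 0)
    (hlam_ne1 : ∀ i, 1 ≤ i → i ≤ n - 2 → lam i ≠ 1)
    (hlam_inj : ∀ i j, i ≤ n - 2 → j ≤ n - 2 → lam i = lam j → i = j)
    (ρ : ℕ → ℂ) (hρ : ∀ j, 1 ≤ j → j ≤ n - 1 → ρ j ^ k = - lam (j - 1))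
    (c : ℕ → ℕ → ℂ)
    (hc : ∀ i j, c i j = ρ j * (lam (j - 1))⁻¹ ^ i * genBinom ((k : ℂ))⁻¹ i)
    (v : ℕ → PowerSeries ℂ)
    (hv0 : v 0 = 1) (hv1 : v 1 = PowerSeries.X)
    (hv : ∀ j, 1 ≤ j → j ≤ n - 1 → ∀ m,
      PowerSeries.coeff m (v (j + 1)) = if k ∣ m then c (m / k) j else 0) :
    ∃ (A : Matrix.GeneralLinearGroup (Fin (n + 1)) ℂ) (g G : ℕ → PowerSeries ℂ),
      (∀ i, i ≤ n - 2 → (g i).order = i + 1) ∧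
      (∀ i, i ≤ n - 2 → PowerSeries.coeff (i + 1) (g i) = 1) ∧
      (∀ i, i ≤ n - 2 → ∀ m, PowerSeries.coeff m (G i) =
        if k ∣ m then PowerSeries.coeff (m / k) (g i) else 0) ∧
      (∀ r : Fin (n + 1), ∑ s : Fin (n + 1), A.val r s • v (s : ℕ) =
        if (r : ℕ) = 0 then 1
        else if (r : ℕ) = 1 then PowerSeries.X
        else G ((r : ℕ) - 2)) := by
  classical
  have hn0 : 0 < n := by omega
  have hk0 : k ≠ 0 := by omega
  -- λ is nonzero on [0, n-2]
  have hlamne0' : ∀ t, t ≤ n - 2 → lam t ≠ 0 := by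
    intro t ht
    rcases Nat.eq_zero_or_pos t with h | h
    · rw [h, hlam0]; exact one_ne_zero
    · exact hlam_ne0 t h ht
  -- the diagonal scalings and nodes
  obtain ⟨d, hd0, hd1⟩ : ∃ d : ℕ → ℂ, d 0 = 1 ∧ ∀ t, t ≠ 0 → d t = ρ t :=
    ⟨fun t => if t = 0 then 1 else ρ t, by simp, fun t ht => by simp [ht]⟩
  obtain ⟨x, hx0, hx1⟩ : ∃ x : ℕ → ℂ, x 0 = 0 ∧ ∀ t, t ≠ 0 → x t = (lam (t-1))⁻¹ :=
    ⟨fun t => if t = 0 then 0 else (lam (t-1))⁻¹, by simp, fun t ht => by simp [ht]⟩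
  -- the power series u t  (u 0 = 1, u j = ∑ c_{i,j} z^i for 1 ≤ j ≤ n-1)
  obtain ⟨u, hu⟩ : ∃ u : ℕ → PowerSeries ℂ, ∀ t i,
      PowerSeries.coeff i (u t) = d t * x t ^ i * genBinom ((k:ℂ))⁻¹ i :=
    ⟨fun t => PowerSeries.mk fun i => d t * x t ^ i * genBinom ((k:ℂ))⁻¹ i,
      fun t i => PowerSeries.coeff_mk _ _⟩
  -- the coefficient matrix
  obtain ⟨M, hM⟩ : ∃ M : Matrix (Fin n) (Fin n) ℂ, ∀ j i : Fin n,
      M j i = d (j:ℕ) * x (j:ℕ) ^ (i:ℕ) * genBinom ((k:ℂ))⁻¹ (i:ℕ) :=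
    ⟨Matrix.of fun j i => d (j:ℕ) * x (j:ℕ) ^ (i:ℕ) * genBinom ((k:ℂ))⁻¹ (i:ℕ),
      fun _ _ => rfl⟩
  -- d is nonzero
  have hdne : ∀ j : Fin n, d (j:ℕ) ≠ 0 := by
    intro j
    by_cases hj : (j:ℕ) = 0
    · rw [hj, hd0]; exact one_ne_zero
    · rw [hd1 _ hj]
      intro h
      have hb := hρ (j:ℕ) (by omega) (by have := j.isLt; omega)
      rw [h, zero_pow hk0] at hb
      have : lam ((j:ℕ)-1) = 0 := by
        have := hb.symm
        rwa [neg_eq_zero] at this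
      exact hlamne0' ((j:ℕ)-1) (by have := j.isLt; omega) this
  -- the nodes are injective
  have hxinj : Function.Injective fun j : Fin n => x (j:ℕ) := by
    intro a b hab
    simp only at hab
    by_cases ha : (a:ℕ) = 0 <;> by_cases hb : (b:ℕ) = 0
    · exact Fin.ext (by omega)
    · exfalso
      rw [ha, hx0, hx1 _ hb] at hab
      exact inv_ne_zero (hlamne0' ((b:ℕ)-1) (by have := b.isLt; omega)) hab.symm
    · exfalso
      rw [hb, hx0, hx1 _ ha] at hab
      exact inv_ne_zero (hlamne0' ((a:ℕ)-1) (by have := a.isLt; omega)) hab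
    · rw [hx1 _ ha, hx1 _ hb] at hab
      have := hlam_inj ((a:ℕ)-1) ((b:ℕ)-1) (by have := a.isLt; omega)
        (by have := b.isLt; omega) (inv_injective hab)
      exact Fin.ext (by omega)
  -- M is invertible
  have hdet : IsUnit M.det := by
    have hMfact : M = Matrix.diagonal (fun j : Fin n => d (j:ℕ)) *
        Matrix.vandermonde (fun j : Fin n => x (j:ℕ)) *
        Matrix.diagonal (fun i : Fin n => genBinom ((k:ℂ))⁻¹ (i:ℕ)) := by
      ext j i
      rw [Matrix.mul_diagonal, Matrix.diagonal_mul, hM]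
      simp [Matrix.vandermonde]
    rw [isUnit_iff_ne_zero, hMfact, Matrix.det_mul, Matrix.det_mul,
      Matrix.det_diagonal, Matrix.det_diagonal]
    refine mul_ne_zero (mul_ne_zero ?_ ?_) ?_
    · rw [Finset.prod_ne_zero_iff]; intro j _; exact hdne j
    · exact Matrix.det_vandermonde_ne_zero_iff.mpr hxinj
    · rw [Finset.prod_ne_zero_iff]; intro i _; exact genBinom_ne_zero hk _
  obtain ⟨B, hBM, hMB⟩ : ∃ B : Matrix (Fin n) (Fin n) ℂ, B * M = 1 ∧ M * B = 1 :=
    ⟨M⁻¹, Matrix.nonsing_inv_mul M hdet, Matrix.mul_nonsing_inv M hdet⟩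
  -- row 0 of M is e₀
  have hM0 : ∀ i : Fin n, M ⟨0, hn0⟩ i = if (⟨0, hn0⟩ : Fin n) = i then 1 else 0 := by
    intro i
    rw [hM]
    simp only [hd0, hx0, one_mul]
    by_cases hi : (i:ℕ) = 0
    · rw [hi, pow_zero, one_mul, genBinom_zero, if_pos (Fin.ext hi.symm)]
    · rw [zero_pow hi, zero_mul, if_neg]
      intro h
      exact hi (by simpa using congrArg Fin.val h.symm)
  -- hence row 0 of B is e₀
  have hB0 : ∀ j : Fin n, B ⟨0, hn0⟩ j = if (⟨0, hn0⟩ : Fin n) = j then 1 else 0 := by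
    intro j
    have h := congrFun (congrFun hMB ⟨0, hn0⟩) j
    rw [Matrix.mul_apply, Fintype.sum_eq_single (⟨0, hn0⟩ : Fin n)
      (fun b hb => by rw [hM0 b, if_neg (Ne.symm hb), zero_mul]),
      hM0, if_pos rfl, one_mul] at h
    rw [h, Matrix.one_apply]
  -- the series g
  obtain ⟨g, hgdef, hgtriv⟩ : ∃ g : ℕ → PowerSeries ℂ,
      (∀ l (hl : l + 1 < n), g l = ∑ j : Fin n, B ⟨l+1, hl⟩ j • u (j:ℕ)) ∧
      (∀ l, ¬ (l + 1 < n) → g l = 0) :=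
    ⟨fun l => if hl : l + 1 < n then ∑ j : Fin n, B ⟨l+1, hl⟩ j • u (j:ℕ) else 0,
      fun l hl => by simp only [dif_pos hl], fun l hl => by simp only [dif_neg hl]⟩
  -- coefficients of g in degrees < n
  have hgcoeff : ∀ l (hl : l + 1 < n) (i : ℕ) (hi : i < n),
      PowerSeries.coeff i (g l) = if l + 1 = i then 1 else 0 := by
    intro l hl i hi
    rw [hgdef l hl, map_sum]
    simp only [LinearMap.map_smul, smul_eq_mul]
    have h1 : ∀ j : Fin n, PowerSeries.coeff i (u (j:ℕ)) = M j ⟨i, hi⟩ := by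
      intro j; rw [hu, hM]
    calc ∑ j : Fin n, B ⟨l+1, hl⟩ j * PowerSeries.coeff i (u (j:ℕ))
        = ∑ j : Fin n, B ⟨l+1, hl⟩ j * M j ⟨i, hi⟩ := by
          exact Finset.sum_congr rfl fun j _ => by rw [h1 j]
      _ = (B * M) ⟨l+1, hl⟩ ⟨i, hi⟩ := (Matrix.mul_apply).symm
      _ = if l + 1 = i then 1 else 0 := by
          rw [hBM, Matrix.one_apply]
          simp [Fin.mk.injEq]
  -- substitution series G
  obtain ⟨G, hG⟩ : ∃ G : ℕ → PowerSeries ℂ, ∀ l m,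
      PowerSeries.coeff m (G l) = if k ∣ m then PowerSeries.coeff (m / k) (g l) else 0 :=
    ⟨fun l => PowerSeries.mk fun m => if k ∣ m then PowerSeries.coeff (m / k) (g l) else 0,
      fun l m => PowerSeries.coeff_mk _ _⟩
  -- the index bijection
  obtain ⟨fE, hfE1, hfE2, hfE3⟩ : ∃ fE : Fin n ⊕ Unit → Fin (n+1),
      (∀ j : Fin n, (j:ℕ) = 0 → fE (Sum.inl j) = ⟨0, by omega⟩) ∧
      (∀ j : Fin n, (j:ℕ) ≠ 0 → fE (Sum.inl j) = ⟨(j:ℕ)+1, by have := j.isLt; omega⟩) ∧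
      (∀ b : Unit, fE (Sum.inr b) = ⟨1, by omega⟩) := by
    refine ⟨fun t => match t with
      | Sum.inl j => if (j:ℕ) = 0 then ⟨0, by omega⟩ else ⟨(j:ℕ)+1, by have := j.isLt; omega⟩
      | Sum.inr _ => ⟨1, by omega⟩, ?_, ?_, ?_⟩
    · intro j hj; simp only [hj, if_pos]
    · intro j hj; simp only [hj, if_neg, ite_false]
    · intro b; rfl
  have hfEval : ∀ t : Fin n ⊕ Unit, ((fE t : Fin (n+1)) : ℕ) =
      match t with
      | Sum.inl j => if (j:ℕ) = 0 then 0 else (j:ℕ)+1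
      | Sum.inr _ => 1 := by
    intro t
    match t with
    | Sum.inl j =>
      by_cases hj : (j:ℕ) = 0
      · rw [hfE1 j hj]; simp [hj]
      · rw [hfE2 j hj]; simp [hj]
    | Sum.inr b => rw [hfE3 b]
  have hfbij : Function.Bijective fE := by
    rw [Fintype.bijective_iff_injective_and_card]
    constructor
    · intro a b hab
      have hval := congrArg Fin.val hab
      rcases a with j | b1 <;> rcases b with j' | b2
      · have h1 := hfEval (Sum.inl j)
        have h2 := hfEval (Sum.inl j')
        simp only at h1 h2
        rw [h1, h2] at hval
        by_cases hj : (j:ℕ) = 0 <;> by_cases hj' : (j':ℕ) = 0 <;>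
          simp only [hj, hj', if_true, if_false, ite_true, ite_false] at hval <;>
          exact congrArg Sum.inl (Fin.ext (by omega))
      · exfalso
        have h1 := hfEval (Sum.inl j)
        have h2 := hfEval (Sum.inr b2)
        simp only at h1 h2
        rw [h1, h2] at hval
        by_cases hj : (j:ℕ) = 0 <;> simp only [hj, ite_true, ite_false] at hval <;> omega
      · exfalso
        have h1 := hfEval (Sum.inr b1)
        have h2 := hfEval (Sum.inl j')
        simp only at h1 h2
        rw [h1, h2] at hval
        by_cases hj : (j':ℕ) = 0 <;> simp only [hj, ite_true, ite_false] at hval <;> omega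
      · cases b1; cases b2; rfl
    · simp
  obtain ⟨e, he⟩ : ∃ e : (Fin n ⊕ Unit) ≃ Fin (n+1), ∀ t, e t = fE t :=
    ⟨Equiv.ofBijective fE hfbij, fun t => rfl⟩
  -- block matrices
  have hblkmul : ∀ X Y : Matrix (Fin n) (Fin n) ℂ, X * Y = 1 →
      (Matrix.reindex e e (Matrix.fromBlocks X 0 0 (1 : Matrix Unit Unit ℂ))) *
      (Matrix.reindex e e (Matrix.fromBlocks Y 0 0 (1 : Matrix Unit Unit ℂ))) = 1 := by
    intro X Y hXY
    rw [Matrix.reindex_apply, Matrix.reindex_apply, Matrix.submatrix_mul_equiv,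
      Matrix.fromBlocks_multiply]
    simp only [Matrix.mul_zero, Matrix.zero_mul, add_zero, zero_add, Matrix.mul_one, hXY]
    rw [Matrix.fromBlocks_one, Matrix.submatrix_one_equiv]
  set Am := Matrix.reindex e e (Matrix.fromBlocks B 0 0 (1 : Matrix Unit Unit ℂ)) with hAm
  set Am' := Matrix.reindex e e (Matrix.fromBlocks M 0 0 (1 : Matrix Unit Unit ℂ)) with hAm'
  have hA1 : Am * Am' = 1 := hblkmul B M hBM
  have hA2 : Am' * Am = 1 := hblkmul M B hMB
  -- the key coefficient identity between v and u
  have hvu : ∀ (j : Fin n) (m : ℕ),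
      PowerSeries.coeff m (v ((fE (Sum.inl j) : Fin (n+1)) : ℕ)) =
      if k ∣ m then PowerSeries.coeff (m / k) (u (j:ℕ)) else 0 := by
    intro j m
    by_cases hj : (j:ℕ) = 0
    · rw [hfE1 j hj]
      simp only [Fin.val_mk]  -- hopefully (⟨0,_⟩ : Fin (n+1)).val = 0
      rw [hv0, hj]
      rw [PowerSeries.coeff_one]
      by_cases hm : m = 0
      · rw [hm]
        simp only [if_pos rfl, if_pos (Nat.dvd_zero k), Nat.zero_div]
        rw [hu, hd0, pow_zero, genBinom_zero]
        norm_num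
      · rw [if_neg hm]
        by_cases hkm : k ∣ m
        · rw [if_pos hkm, hu, hd0, hx0]
          have hmk : m / k ≠ 0 := by
            have : k ≤ m := Nat.le_of_dvd (Nat.pos_of_ne_zero hm) hkm
            have := Nat.div_pos this (by omega)
            omega
          rw [zero_pow hmk]
          ring
        · rw [if_neg hkm]
    · rw [hfE2 j hj]
      simp only [Fin.val_mk]
      rw [hv (j:ℕ) (by omega) (by have := j.isLt; omega) m]
      by_cases hkm : k ∣ m
      · rw [if_pos hkm, if_pos hkm, hc, hu, hd1 _ hj, hx1 _ hj]
      · rw [if_neg hkm, if_neg hkm]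
  -- rewrite the row sums through the bijection
  have hrow : ∀ r : Fin (n+1), ∑ s : Fin (n+1), Am r s • v (s : ℕ) =
      (∑ j : Fin n, Matrix.fromBlocks B 0 0 (1 : Matrix Unit Unit ℂ) (e.symm r) (Sum.inl j)
          • v ((fE (Sum.inl j) : Fin (n+1)) : ℕ)) +
      (Matrix.fromBlocks B 0 0 (1 : Matrix Unit Unit ℂ) (e.symm r) (Sum.inr ())
          • v ((fE (Sum.inr ()) : Fin (n+1)) : ℕ)) := by
    intro r
    rw [← Fintype.sum_equiv e
      (fun t => Matrix.fromBlocks B 0 0 (1 : Matrix Unit Unit ℂ) (e.symm r) t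
          • v ((fE t : Fin (n+1)) : ℕ))
      (fun s => Am r s • v (s : ℕ))
      (fun t => by simp only [hAm, Matrix.reindex_apply, Matrix.submatrix_apply,
        ← he, Equiv.symm_apply_apply])]
    rw [Fintype.sum_sum_type]
    simp
  -- finish
  refine ⟨⟨Am, Am', hA1, hA2⟩, g, G, ?_, ?_, ?_, ?_⟩
  · -- order
    intro i hi
    have h1 : i + 1 < n := by omega
    have h2 := PowerSeries.order_eq_nat (R := ℂ) (φ := g i) (n := i+1)
    rw [Nat.cast_add, Nat.cast_one] at h2
    rw [h2]
    constructor
    · rw [hgcoeff i h1 (i+1) h1, if_pos rfl]; exact one_ne_zero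
    · intro i' hi'
      rw [hgcoeff i h1 i' (by omega), if_neg (by omega)]
  · -- leading coefficient
    intro i hi
    have h1 : i + 1 < n := by omega
    rw [hgcoeff i h1 (i+1) h1, if_pos rfl]
  · -- G is the substitution of z^k
    intro i _ m
    exact hG i m
  · -- the row identities
    intro r
    rw [hrow r]
    by_cases hr0 : (r : ℕ) = 0
    · rw [if_pos hr0]
      have hsymm : e.symm r = Sum.inl ⟨0, hn0⟩ := by
        rw [Equiv.symm_apply_eq, he, hfE1 _ rfl]
        exact Fin.ext (by simpa using hr0)
      rw [hsymm]
      simp only [Matrix.fromBlocks_apply₁₁, Matrix.fromBlocks_apply₁₂, Matrix.zero_apply,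
        zero_smul, add_zero]
      rw [Fintype.sum_eq_single (⟨0, hn0⟩ : Fin n)
        (fun b hb => by rw [hB0 b, if_neg (Ne.symm hb), zero_smul])]
      rw [hB0, if_pos rfl, one_smul]
      rw [hfE1 _ rfl]
      exact hv0
    · rw [if_neg hr0]
      by_cases hr1 : (r : ℕ) = 1
      · rw [if_pos hr1]
        have hsymm : e.symm r = Sum.inr () := by
          rw [Equiv.symm_apply_eq, he, hfE3]
          exact Fin.ext (by simpa using hr1)
        rw [hsymm]
        simp only [Matrix.fromBlocks_apply₂₁, Matrix.fromBlocks_apply₂₂, Matrix.zero_apply,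
          zero_smul, Finset.sum_const_zero, zero_add, Matrix.one_apply_eq, one_smul]
        rw [hfE3]
        exact hv1
      · rw [if_neg hr1]
        have hr2 : 2 ≤ (r : ℕ) := by omega
        have hrn : (r : ℕ) - 1 < n := by have := r.isLt; omega
        have hsymm : e.symm r = Sum.inl ⟨(r:ℕ)-1, hrn⟩ := by
          rw [Equiv.symm_apply_eq, he, hfE2 _ (by simp; omega)]
          exact Fin.ext (by simp; omega)
        rw [hsymm]
        simp only [Matrix.fromBlocks_apply₁₁, Matrix.fromBlocks_apply₁₂, Matrix.zero_apply,
          zero_smul, add_zero]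
        -- now show ∑ j, B ⟨r-1⟩ j • v (fE (inl j)) = G (r-2)
        have hl : ((r:ℕ) - 2) + 1 < n := by omega
        have hfin : (⟨(r:ℕ)-2+1, hl⟩ : Fin n) = ⟨(r:ℕ)-1, hrn⟩ := Fin.ext (by simp; omega)
        ext m
        rw [map_sum, hG]
        simp only [LinearMap.map_smul, smul_eq_mul]
        have hterm : ∀ j : Fin n,
            B ⟨(r:ℕ)-1, hrn⟩ j * PowerSeries.coeff m (v ((fE (Sum.inl j) : Fin (n+1)) : ℕ)) =
            B ⟨(r:ℕ)-1, hrn⟩ j * (if k ∣ m then PowerSeries.coeff (m / k) (u (j:ℕ)) else 0) :=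
          fun j => by rw [hvu j m]
        rw [Finset.sum_congr rfl fun j _ => hterm j]
        by_cases hkm : k ∣ m
        · simp only [if_pos hkm]
          rw [hgdef ((r:ℕ)-2) hl, hfin, map_sum]
          simp only [LinearMap.map_smul, smul_eq_mul]
        · simp only [if_neg hkm, mul_zero, Finset.sum_const_zero]
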